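/- Let A[u₁] and B[u₂] be the sets defined above (with fixed prime p, bound w*, and rational r* = b₀*/(q₀*−1) as above). Then for all u₁, u₂ ≤ u*, the distance ρ(A[u₁], B[u₂]) = inf{|α − β| : α ∈ A[u₁], β ∈ B[u₂]} is strictly positive. -/

import Mathlib

/-- The set `A[u]`. -/
def Aset (p u : ℕ) (w : ℝ) : Set ℝ :=
  {x | ∃ (n : Fin u → ℕ) (a : Fin u → ℤ),
    Monotone n ∧ (∀ h : 0 < u, n ⟨0, h⟩ = 0) ∧
    (∀ i, 0 ≤ a i ∧ (a i : ℝ) < w) ∧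
    x = ∑ i, (a i : ℝ) * (p : ℝ) ^ (-(n i : ℤ))}

/-- The set `B[u]`. -/
def Bset (p u : ℕ) (r : ℝ) : Set ℝ :=
  {x | ∃ (hu : 0 < u) (m b : Fin u → ℕ),
    Monotone m ∧ m ⟨0, hu⟩ = 0 ∧ b ⟨0, hu⟩ ≠ 0 ∧
    (∑ i, b i) < p ∧
    x = r * ∑ i, (b i : ℝ) * (p : ℝ) ^ (-(m i : ℤ))}

/-- For all `u₁, u₂ ≤ u*`, the distance `ρ(A[u₁], B[u₂]) = inf{|α - β|}` is strictly
positive, where the parameters are a prime `p`, a bound `w* > 0`, and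
`r* = b₀*/(q₀*-1)` with `q₀* = p^{N₀*}`, `N₀* ≥ 2`, `gcd(b₀*, p(q₀*-1)) = 1`. -/
def Tset (p : ℕ) : Set ℝ := insert 0 (Set.range fun n : ℕ => (p:ℝ) ^ (-(n:ℤ)))

lemma isCompact_Tset {p : ℕ} (hp2 : 2 ≤ p) : IsCompact (Tset p) := by
  have hp1 : (1:ℝ) < p := by exact_mod_cast hp2.trans_lt' one_lt_two
  have h : Filter.Tendsto (fun n : ℕ => (p:ℝ) ^ (-(n:ℤ))) Filter.atTop (nhds 0) := by
    have : ∀ n : ℕ, ((p:ℝ)⁻¹) ^ n = (p:ℝ) ^ (-(n:ℤ)) := by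
      intro n; rw [zpow_neg, zpow_natCast, inv_pow]
    refine Filter.Tendsto.congr this ?_
    apply tendsto_pow_atTop_nhds_zero_of_lt_one
    · positivity
    · rw [inv_lt_one_iff₀]; right; exact hp1
  exact h.isCompact_insert_range

lemma finite_W (w : ℝ) : Set.Finite {x : ℝ | ∃ a : ℤ, 0 ≤ a ∧ (a:ℝ) < w ∧ x = a} := by
  apply Set.Finite.subset (Set.Finite.image (fun a : ℤ => (a:ℝ)) (Set.finite_Icc (0:ℤ) ⌈w⌉))
  rintro x ⟨a, ha0, haw, rfl⟩
  exact ⟨a, ⟨ha0, by exact_mod_cast haw.le.trans (Int.le_ceil w)⟩, rfl⟩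

lemma isCompact_Aset {p : ℕ} (hp2 : 2 ≤ p) (u : ℕ) {w : ℝ} (hw : 0 < w) :
    IsCompact (Aset p u w) := by
  have key : Aset p u w =
      (fun q : (Fin u → ℝ) × (Fin u → ℝ) => ∑ i, q.1 i * q.2 i) ''
        ((Set.univ.pi fun _ : Fin u => {x : ℝ | ∃ a : ℤ, 0 ≤ a ∧ (a:ℝ) < w ∧ x = a}) ×ˢ
         (Set.univ.pi fun i : Fin u => if (i:ℕ) = 0 then {1} else Tset p)) := by
    ext x
    constructor
    · rintro ⟨n, a, hmono, h0, hb, rfl⟩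
      refine ⟨⟨fun i => (a i : ℝ), fun i => (p:ℝ) ^ (-(n i : ℤ))⟩, ⟨?_, ?_⟩, rfl⟩
      · intro i _; exact ⟨a i, (hb i).1, (hb i).2, rfl⟩
      · intro i _
        by_cases hi : (i:ℕ) = 0
        · have hu : 0 < u := hi ▸ i.isLt
          have : i = ⟨0, hu⟩ := Fin.ext hi
          simp only [hi, if_true, this, h0 hu]
          norm_num
        · simp only [hi, if_false]
          exact Set.mem_insert_of_mem _ ⟨n i, rfl⟩
    · rintro ⟨⟨av, tv⟩, ⟨hav, htv⟩, rfl⟩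
      simp only at hav htv ⊢
      have key : ∀ i : Fin u, ∃ (ni : ℕ) (ai : ℤ), 0 ≤ ai ∧ (ai:ℝ) < w ∧
          av i * tv i = (ai:ℝ) * (p:ℝ) ^ (-(ni:ℤ)) ∧ ((i:ℕ) = 0 → ni = 0) := by
        intro i
        obtain ⟨a, ha0, haw, hax⟩ := hav i (Set.mem_univ i)
        have hti := htv i (Set.mem_univ i)
        by_cases hi : (i:ℕ) = 0
        · simp only [hi, if_true] at hti
          refine ⟨0, a, ha0, haw, ?_, fun _ => rfl⟩
          rw [hax, hti]; norm_num
        · simp only [hi, if_false] at hti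
          rcases hti with ht0 | ⟨n, hn⟩
          · refine ⟨0, 0, le_refl _, by exact_mod_cast hw, ?_, fun h => absurd h hi⟩
            rw [ht0]; norm_num
          · exact ⟨n, a, ha0, haw, by rw [hax, ← hn], fun h => absurd h hi⟩
      choose n a h1 h2 h3 h4 using key
      let σ := Tuple.sort n
      refine ⟨n ∘ σ, a ∘ σ, Tuple.monotone_sort n, ?_, fun i => ⟨h1 _, h2 _⟩, ?_⟩
      · intro hu
        have hmin : n (σ ⟨0, hu⟩) ≤ n (σ (σ.symm ⟨0, hu⟩)) :=
          Tuple.monotone_sort n (by exact Fin.mk_le_of_le_val (Nat.zero_le _))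
        rw [Equiv.apply_symm_apply, h4 ⟨0, hu⟩ rfl] at hmin
        exact Nat.le_antisymm hmin (Nat.zero_le _)
      · calc ∑ i, (av i) * (tv i) = ∑ i, (a i : ℝ) * (p:ℝ) ^ (-(n i:ℤ)) := by
              exact Finset.sum_congr rfl fun i _ => h3 i
          _ = ∑ i, (a (σ i) : ℝ) * (p:ℝ) ^ (-(n (σ i):ℤ)) :=
              (Equiv.sum_comp σ (fun i => (a i : ℝ) * (p:ℝ) ^ (-(n i:ℤ)))).symm
  rw [key]
  apply IsCompact.image
  · exact (isCompact_univ_pi fun i => (finite_W w).isCompact).prod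
      (isCompact_univ_pi fun i => by
        by_cases hi : (i:ℕ) = 0
        · simp only [hi, if_true]; exact isCompact_singleton
        · simp only [hi, if_false]; exact isCompact_Tset hp2)
  · exact continuous_finset_sum _ fun i _ =>
      ((continuous_apply i).comp continuous_fst).mul ((continuous_apply i).comp continuous_snd)

lemma isCompact_Bset {p : ℕ} (hp2 : 2 ≤ p) (u : ℕ) (r : ℝ) :
    IsCompact (Bset p u r) := by
  rcases Nat.eq_zero_or_pos u with hu | hu
  · subst hu
    have : Bset p 0 r = ∅ := by
      ext x; simp only [Bset, Set.mem_setOf_eq, Set.mem_empty_iff_false, iff_false]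
      rintro ⟨h, -⟩; exact absurd h (lt_irrefl 0)
    rw [this]; exact isCompact_empty
  have key : Bset p u r =
      ⋃ b ∈ {b : Fin u → ℕ | b ⟨0, hu⟩ ≠ 0 ∧ ∑ i, b i < p},
        (fun t : Fin u → ℝ => r * ∑ i, (b i : ℝ) * t i) ''
          (Set.univ.pi fun i : Fin u => if (i:ℕ) = 0 then {1} else Tset p) := by
    ext x
    simp only [Set.mem_iUnion, Set.mem_setOf_eq]
    constructor
    · rintro ⟨hu', m, b, hmono, hm0, hb0, hsum, rfl⟩
      refine ⟨b, ⟨hb0, hsum⟩, fun i => (p:ℝ) ^ (-(m i : ℤ)), ?_, rfl⟩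
      intro i _
      by_cases hi : (i:ℕ) = 0
      · have : i = ⟨0, hu⟩ := Fin.ext hi
        simp only [hi, if_true, this, hm0]
        norm_num
      · simp only [hi, if_false]
        exact Set.mem_insert_of_mem _ ⟨m i, rfl⟩
    · rintro ⟨b, ⟨hb0, hsum⟩, tv, htv, rfl⟩
      have key2 : ∀ i : Fin u, ∃ (mi bi : ℕ), bi ≤ b i ∧
          (b i : ℝ) * tv i = (bi:ℝ) * (p:ℝ) ^ (-(mi:ℤ)) ∧
          ((i:ℕ) = 0 → mi = 0 ∧ bi = b i) := by
        intro i
        have hti := htv i (Set.mem_univ i)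
        by_cases hi : (i:ℕ) = 0
        · simp only [hi, if_true] at hti
          refine ⟨0, b i, le_refl _, ?_, fun _ => ⟨rfl, rfl⟩⟩
          rw [hti]; norm_num
        · simp only [hi, if_false] at hti
          rcases hti with ht0 | ⟨n, hn⟩
          · refine ⟨0, 0, Nat.zero_le _, ?_, fun h => absurd h hi⟩
            rw [ht0]; norm_num
          · exact ⟨n, b i, le_refl _, by rw [← hn], fun h => absurd h hi⟩
      choose m b' h1 h2 h3 using key2
      let σ₀ := Tuple.sort m
      have hmσ₀ : Monotone (m ∘ σ₀) := Tuple.monotone_sort m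
      have hm00 : m ⟨0, hu⟩ = 0 := (h3 ⟨0, hu⟩ rfl).1
      -- sorted value at 0 is 0
      have hmσ₀0 : m (σ₀ ⟨0, hu⟩) = 0 := by
        have hmin : m (σ₀ ⟨0, hu⟩) ≤ m (σ₀ (σ₀.symm ⟨0, hu⟩)) :=
          hmσ₀ (by exact Fin.mk_le_of_le_val (Nat.zero_le _))
        rw [Equiv.apply_symm_apply, hm00] at hmin
        omega
      -- the position of the original head after sorting
      let k : Fin u := σ₀.symm ⟨0, hu⟩
      let σ : Equiv.Perm (Fin u) := (Equiv.swap ⟨0, hu⟩ k).trans σ₀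
      have hswap : m ∘ σ = m ∘ σ₀ := by
        funext j
        show m (σ₀ (Equiv.swap ⟨0, hu⟩ k j)) = m (σ₀ j)
        rcases Equiv.swap_apply_def ⟨0, hu⟩ k j with h
        by_cases hj0 : j = ⟨0, hu⟩
        · subst hj0
          rw [Equiv.swap_apply_left, Equiv.apply_symm_apply, hm00, hmσ₀0]
        · by_cases hjk : j = k
          · subst hjk
            rw [Equiv.swap_apply_right, hmσ₀0, Equiv.apply_symm_apply, hm00]
          · rw [Equiv.swap_apply_of_ne_of_ne hj0 hjk]
      refine ⟨hu, m ∘ σ, b' ∘ σ, ?_, ?_, ?_, ?_, ?_⟩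
      · rw [hswap]; exact hmσ₀
      · show m (σ₀ (Equiv.swap ⟨0, hu⟩ k ⟨0, hu⟩)) = 0
        rw [Equiv.swap_apply_left, Equiv.apply_symm_apply, hm00]
      · show b' (σ₀ (Equiv.swap ⟨0, hu⟩ k ⟨0, hu⟩)) ≠ 0
        rw [Equiv.swap_apply_left, Equiv.apply_symm_apply]
        rw [(h3 ⟨0, hu⟩ rfl).2]
        exact hb0
      · calc ∑ i, (b' ∘ σ) i = ∑ i, b' i := Equiv.sum_comp σ b'
          _ ≤ ∑ i, b i := Finset.sum_le_sum fun i _ => h1 i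
          _ < p := hsum
      · show r * ∑ i, (b i : ℝ) * tv i = r * ∑ i, ((b' ∘ σ) i : ℝ) * (p:ℝ) ^ (-((m ∘ σ) i : ℤ))
        simp only [Function.comp_apply]
        congr 1
        calc ∑ i, (b i : ℝ) * tv i = ∑ i, (b' i : ℝ) * (p:ℝ) ^ (-(m i : ℤ)) :=
              Finset.sum_congr rfl fun i _ => h2 i
          _ = ∑ i, (b' (σ i) : ℝ) * (p:ℝ) ^ (-(m (σ i) : ℤ)) :=
              (Equiv.sum_comp σ (fun i => (b' i : ℝ) * (p:ℝ) ^ (-(m i : ℤ)))).symm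
  rw [key]
  apply Set.Finite.isCompact_biUnion
  · apply Set.Finite.subset (Set.Finite.pi fun i : Fin u => Set.finite_Iio p)
    rintro b ⟨-, hsum⟩ 
    intro i _
    exact lt_of_le_of_lt (Finset.single_le_sum (fun j _ => Nat.zero_le _) (Finset.mem_univ i)) hsum
  · intro b _
    apply IsCompact.image
    · exact isCompact_univ_pi fun i => by
        by_cases hi : (i:ℕ) = 0
        · simp only [hi, if_true]; exact isCompact_singleton
        · simp only [hi, if_false]; exact isCompact_Tset hp2
    · exact continuous_const.mul (continuous_finset_sum _ fun i _ =>
        continuous_const.mul (continuous_apply i))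

lemma disjoint_AB (p : ℕ) (hp : p.Prime) (w : ℝ)
    (N₀ b₀ q₀ : ℕ) (hN₀ : 2 ≤ N₀) (hq₀ : q₀ = p ^ N₀)
    (hb₀ : Nat.gcd b₀ (p * (q₀ - 1)) = 1)
    (r : ℝ) (hr : r = (b₀ : ℝ) / ((q₀ : ℝ) - 1))
    (u₁ u₂ : ℕ) :
    ∀ x ∈ Aset p u₁ w, x ∉ Bset p u₂ r := by
  have hp2 : 2 ≤ p := hp.two_le
  have hq4 : 4 ≤ q₀ := by
    rw [hq₀]
    calc (4:ℕ) = 2 ^ 2 := rfl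
      _ ≤ p ^ N₀ := Nat.pow_le_pow_left hp2 2 |>.trans (Nat.pow_le_pow_right (by omega) hN₀)
  rintro x ⟨n, a, -, -, ha, rfl⟩ ⟨hu, m, b, -, -, hb0, hsum, heq⟩
  set Q : ℕ := q₀ - 1 with hQ
  have hQ3 : 3 ≤ Q := by omega
  have hpR : (p:ℝ) ≠ 0 := by positivity
  have hQR : ((Q:ℝ)) = (q₀:ℝ) - 1 := by rw [hQ, Nat.cast_sub (by omega)]; norm_num
  have hQR0 : (Q:ℝ) ≠ 0 := by
    rw [hQR]
    have h4 : (4:ℝ) ≤ (q₀:ℝ) := by exact_mod_cast hq4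
    intro h; linarith
  set N : ℕ := ∑ i, n i + ∑ j, m j with hN
  have hnN : ∀ i, n i ≤ N := fun i => le_trans (Finset.single_le_sum (fun j _ => Nat.zero_le _) (Finset.mem_univ i)) (Nat.le_add_right _ _)
  have hmN : ∀ j, m j ≤ N := fun j => le_trans (Finset.single_le_sum (fun i _ => Nat.zero_le _) (Finset.mem_univ j)) (Nat.le_add_left _ _)
  -- integer forms
  set A' : ℤ := ∑ i, a i * (p:ℤ) ^ (N - n i) with hA'
  set B' : ℕ := ∑ j, b j * p ^ (N - m j) with hB'
  -- real equation: (Q) * A' = b₀ * B'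
  have hterm : ∀ i, (a i : ℝ) * (p : ℝ) ^ (-(n i : ℤ)) * (p:ℝ)^(N:ℕ) = ((a i * (p:ℤ) ^ (N - n i) : ℤ) : ℝ) := by
    intro i
    have : ((p:ℝ))^(N:ℕ) = (p:ℝ)^((N:ℤ)) := by rw [zpow_natCast]
    rw [mul_assoc, this, ← zpow_add₀ hpR]
    have h2 : (-(n i : ℤ) + N) = ((N - n i : ℕ) : ℤ) := by
      have := hnN i; push_cast [this]; ring
    rw [h2, zpow_natCast]
    push_cast
    ring
  have hterm2 : ∀ j, (b j : ℝ) * (p : ℝ) ^ (-(m j : ℤ)) * (p:ℝ)^(N:ℕ) = ((b j * p ^ (N - m j) : ℕ) : ℝ) := by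
    intro j
    have : ((p:ℝ))^(N:ℕ) = (p:ℝ)^((N:ℤ)) := by rw [zpow_natCast]
    rw [mul_assoc, this, ← zpow_add₀ hpR]
    have h2 : (-(m j : ℤ) + N) = ((N - m j : ℕ) : ℤ) := by
      have := hmN j; push_cast [this]; ring
    rw [h2, zpow_natCast]
    push_cast
    ring
  have hreal : ((Q:ℤ) * A' : ℤ) = ((b₀ * B' : ℕ) : ℤ) := by
    have hmulN := congrArg (fun y => y * (p:ℝ)^(N:ℕ) * (Q:ℝ)) heq
    have hL : (∑ i, (a i : ℝ) * (p : ℝ) ^ (-(n i : ℤ))) * (p:ℝ)^(N:ℕ) * (Q:ℝ) = (Q:ℝ) * (A' : ℝ) := by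
      rw [Finset.sum_mul]
      rw [Finset.sum_congr rfl fun i _ => hterm i]
      rw [hA']
      push_cast
      ring
    have hR : (r * ∑ j, (b j : ℝ) * (p : ℝ) ^ (-(m j : ℤ))) * (p:ℝ)^(N:ℕ) * (Q:ℝ) = (b₀:ℝ) * (B' : ℝ) := by
      have : r * (Q:ℝ) = (b₀ : ℝ) := by
        rw [hr, hQR, div_mul_cancel₀]
        rw [← hQR]; exact hQR0
      calc (r * ∑ j, (b j : ℝ) * (p : ℝ) ^ (-(m j : ℤ))) * (p:ℝ)^(N:ℕ) * (Q:ℝ)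
          = (r * (Q:ℝ)) * ((∑ j, (b j : ℝ) * (p : ℝ) ^ (-(m j : ℤ))) * (p:ℝ)^(N:ℕ)) := by ring
        _ = (b₀:ℝ) * (B' : ℝ) := by
            rw [this, Finset.sum_mul, Finset.sum_congr rfl fun j _ => hterm2 j, hB']
            push_cast
            ring
    rw [hL, hR] at hmulN
    exact_mod_cast hmulN
  -- divisibility
  have hdvd : Q ∣ b₀ * B' := by
    have : (Q:ℤ) ∣ ((b₀ * B' : ℕ) : ℤ) := ⟨A', hreal.symm⟩
    exact_mod_cast this
  have hcop : Nat.Coprime b₀ Q := Nat.Coprime.coprime_dvd_right (dvd_mul_left Q p) hb₀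
  have hdvdB : Q ∣ B' := (Nat.Coprime.dvd_of_dvd_mul_left hcop.symm hdvd)
  -- contradiction via C
  set C : ℕ := ∑ j, b j * p ^ ((N - m j) % N₀) with hC
  haveI : NeZero Q := ⟨by omega⟩
  have hpow : ∀ e : ℕ, ((p:ZMod Q)) ^ e = (p:ZMod Q) ^ (e % N₀) := by
    intro e
    have h1 : (p:ZMod Q) ^ N₀ = 1 := by
      have : ((q₀ : ℕ) : ZMod Q) = 1 := by
        have : q₀ = Q + 1 := by omega
        rw [this]; push_cast; simp [ZMod.natCast_self]
      rw [hq₀] at this; push_cast at this; exact this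
    conv_lhs => rw [← Nat.div_add_mod e N₀, pow_add, pow_mul, h1, one_pow, one_mul]
  have hBC : (B' : ZMod Q) = (C : ZMod Q) := by
    rw [hB', hC]
    push_cast
    exact Finset.sum_congr rfl fun j _ => by rw [hpow (N - m j)]
  have hdvdC : Q ∣ C := by
    have h0 : (B' : ZMod Q) = 0 := (ZMod.natCast_eq_zero_iff B' Q).mpr hdvdB
    rw [h0] at hBC
    exact (ZMod.natCast_eq_zero_iff C Q).mp hBC.symm
  have hCpos : 0 < C := by
    have : 0 < b ⟨0, hu⟩ * p ^ ((N - m ⟨0, hu⟩) % N₀) :=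
      Nat.mul_pos (Nat.pos_of_ne_zero hb0) (pow_pos (by omega) _)
    rw [hC]
    exact lt_of_lt_of_le this (Finset.single_le_sum
      (f := fun j => b j * p ^ ((N - m j) % N₀)) (fun j _ => Nat.zero_le _)
      (Finset.mem_univ (⟨0, hu⟩ : Fin u₂)))
  have hCle : C ≤ (p - 1) * p ^ (N₀ - 1) := by
    calc C ≤ ∑ j, b j * p ^ (N₀ - 1) := by
          apply Finset.sum_le_sum
          intro j _
          apply Nat.mul_le_mul_left
          apply Nat.pow_le_pow_right (by omega)
          have := Nat.mod_lt (N - m j) (show 0 < N₀ by omega)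
          omega
      _ = (∑ j, b j) * p ^ (N₀ - 1) := by rw [Finset.sum_mul]
      _ ≤ (p - 1) * p ^ (N₀ - 1) := Nat.mul_le_mul_right _ (by omega)
  have hkey : (p - 1) * p ^ (N₀ - 1) + p ^ (N₀ - 1) = q₀ := by
    rw [hq₀]
    have : (p - 1) + 1 = p := by omega
    calc (p - 1) * p ^ (N₀ - 1) + p ^ (N₀ - 1) = ((p-1) + 1) * p ^ (N₀-1) := by ring
      _ = p * p ^ (N₀ - 1) := by rw [this]
      _ = p ^ (N₀ - 1 + 1) := by rw [pow_succ]; ring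
      _ = p ^ N₀ := by congr 1; omega
  have hP2 : 2 ≤ p ^ (N₀ - 1) := by
    calc 2 = 2 ^ 1 := rfl
      _ ≤ p ^ (N₀ - 1) := Nat.pow_le_pow_left hp2 1 |>.trans (Nat.pow_le_pow_right (by omega) (by omega))
  have := Nat.le_of_dvd hCpos hdvdC
  omega

theorem stmt4 (p : ℕ) (hp : p.Prime) (w : ℝ) (hw : 0 < w)
    (N₀ b₀ q₀ : ℕ) (hN₀ : 2 ≤ N₀) (hq₀ : q₀ = p ^ N₀)
    (hb₀ : Nat.gcd b₀ (p * (q₀ - 1)) = 1)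
    (r : ℝ) (hr : r = (b₀ : ℝ) / ((q₀ : ℝ) - 1))
    (ustar : ℕ) (u₁ u₂ : ℕ) (hu₁ : u₁ ≤ ustar) (hu₂ : u₂ ≤ ustar) :
    ∃ ε > (0 : ℝ), ∀ α ∈ Aset p u₁ w, ∀ β ∈ Bset p u₂ r, ε ≤ |α - β| := by
  have hp2 : 2 ≤ p := hp.two_le
  have hA : IsCompact (Aset p u₁ w) := isCompact_Aset hp2 u₁ hw
  have hB : IsCompact (Bset p u₂ r) := isCompact_Bset hp2 u₂ r
  have hdisj := disjoint_AB p hp w N₀ b₀ q₀ hN₀ hq₀ hb₀ r hr u₁ u₂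
  by_cases hBne : (Bset p u₂ r).Nonempty
  · have hAne : (Aset p u₁ w).Nonempty :=
      ⟨0, fun _ => 0, fun _ => 0, monotone_const, fun h => rfl,
        fun i => ⟨le_refl 0, by simpa using hw⟩, by simp⟩
    obtain ⟨α₀, hα₀, hmin⟩ := hA.exists_isMinOn hAne
      (Metric.continuous_infDist_pt (Bset p u₂ r)).continuousOn
    have hpos : 0 < Metric.infDist α₀ (Bset p u₂ r) :=
      (hB.isClosed.notMem_iff_infDist_pos hBne).1 (hdisj α₀ hα₀)
    refine ⟨_, hpos, fun α hα β hβ => ?_⟩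
    calc Metric.infDist α₀ (Bset p u₂ r) ≤ Metric.infDist α (Bset p u₂ r) := hmin hα
      _ ≤ dist α β := Metric.infDist_le_dist_of_mem hβ
      _ = |α - β| := Real.dist_eq α β
  · exact ⟨1, one_pos, fun α hα β hβ => absurd ⟨β, hβ⟩ hBne⟩
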